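/- Let G be an m×n matrix over F_q and suppose there exists x₀ ∈ F_q^m, x₀ ≠ 0, such that the codeword x₀·G has Hamming weight exactly d, with support F ⊆ {1,…,n}, |F| = d. Set W = G^T. Then for every u ∈ F_q^n the codeword c = u·W satisfies the linear relation Σ_{i=1}^{m} (x₀)_i c_i = Σ_{j∈F} (x₀·G)_j u_j, where (x₀·G)_j ≠ 0 for every j ∈ F. Consequently, if u is uniformly distributed on F_q^n, then the random vector (u_j)_{j∈F} is NOT independent of c; in particular the threshold security condition fails for the set F of size d, so t = d − 1 is the maximum threshold of the scheme when the code generated by G has minimum distance exactly d. -/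

import Mathlib

open Matrix

/-- Tightness of the threshold.  Suppose some nonzero `x₀ ∈ F^m` produces a
codeword `x₀·G` of Hamming weight exactly `d ≥ 1`, with support `Fs`, `|Fs| = d`, and set
`W = Gᵀ`.  Then every encoder input `u` satisfies the linear relation
`∑ᵢ (x₀)ᵢ cᵢ = ∑_{j ∈ Fs} (x₀·G)ⱼ uⱼ` (with all coefficients `(x₀·G)ⱼ`, `j ∈ Fs`, nonzero),
and consequently, for `u` uniform on `F^n`, the vector `(uⱼ)_{j ∈ Fs}` is NOT independent of
`c = u·W`: threshold security fails for the set `Fs` of size `d`, so `t = d - 1` is the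
maximum threshold when the code has minimum distance exactly `d`. -/
theorem stmt_5 {F : Type} [Field F] [Fintype F] [DecidableEq F]
    (m n d : ℕ) (hd : 1 ≤ d)
    (G : Matrix (Fin m) (Fin n) F)
    (x₀ : Fin m → F) (hx₀ : x₀ ≠ 0)
    (Fs : Finset (Fin n)) (hFs : ∀ j : Fin n, j ∈ Fs ↔ Matrix.vecMul x₀ G j ≠ 0)
    (hcard : Fs.card = d) :
    (∀ u : Fin n → F,
        ∑ i : Fin m, x₀ i * Matrix.vecMul u Gᵀ i
          = ∑ j ∈ Fs, Matrix.vecMul x₀ G j * u j)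
    ∧ (∀ j ∈ Fs, Matrix.vecMul x₀ G j ≠ 0)
    ∧ ¬ (∀ (a : {j // j ∈ Fs} → F) (c : Fin m → F),
          (Finset.univ.filter (fun u : Fin n → F =>
              (fun j : {j // j ∈ Fs} => u j.1) = a ∧ Matrix.vecMul u Gᵀ = c)).card
            * Fintype.card (Fin n → F)
          = (Finset.univ.filter (fun u : Fin n → F =>
              (fun j : {j // j ∈ Fs} => u j.1) = a)).card
            * (Finset.univ.filter (fun u : Fin n → F => Matrix.vecMul u Gᵀ = c)).card) := by
  -- Part 1
  have h1 : ∀ u : Fin n → F,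
      ∑ i : Fin m, x₀ i * Matrix.vecMul u Gᵀ i
        = ∑ j ∈ Fs, Matrix.vecMul x₀ G j * u j := by
    intro u
    have hall : ∑ i : Fin m, x₀ i * Matrix.vecMul u Gᵀ i
        = ∑ j : Fin n, Matrix.vecMul x₀ G j * u j := by
      simp only [Matrix.vecMul, dotProduct, Matrix.transpose_apply,
        Finset.mul_sum, Finset.sum_mul]
      rw [Finset.sum_comm]
      apply Finset.sum_congr rfl; intro j _
      apply Finset.sum_congr rfl; intro i _
      ring
    rw [hall]
    symm
    apply Finset.sum_subset (Finset.subset_univ Fs)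
    intro j _ hj
    have : Matrix.vecMul x₀ G j = 0 := by
      by_contra h; exact hj ((hFs j).2 h)
    simp [this]
  refine ⟨h1, fun j hj => (hFs j).1 hj, ?_⟩
  -- Part 3
  intro hindep
  obtain ⟨j₀, hj₀⟩ : ∃ j, j ∈ Fs := Finset.card_pos.mp (by omega) |>.imp (fun _ h => h) |>.elim (fun j h => ⟨j, h⟩)
  set a : {j // j ∈ Fs} → F := fun j => if (j : Fin n) = j₀ then 1 else 0 with ha
  have key := hindep a 0
  -- LHS filter is empty
  have hL : (Finset.univ.filter (fun u : Fin n → F =>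
      (fun j : {j // j ∈ Fs} => u j.1) = a ∧ Matrix.vecMul u Gᵀ = 0)).card = 0 := by
    rw [Finset.card_eq_zero, Finset.filter_eq_empty_iff]
    rintro u - ⟨hua, huc⟩
    have h0 : ∑ i : Fin m, x₀ i * Matrix.vecMul u Gᵀ i = 0 := by
      rw [huc]; simp
    rw [h1 u] at h0
    have hsum : ∑ j ∈ Fs, Matrix.vecMul x₀ G j * u j = Matrix.vecMul x₀ G j₀ := by
      have huval : ∀ j (h : j ∈ Fs), u j = if j = j₀ then 1 else 0 := by
        intro j h
        have := congrFun hua ⟨j, h⟩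
        simpa [ha] using this
      rw [Finset.sum_congr rfl (fun j hj => by rw [huval j hj])]
      simp only [mul_ite, mul_one, mul_zero]
      rw [Finset.sum_ite_eq' Fs j₀]
      simp [hj₀]
    rw [hsum] at h0
    exact (hFs j₀).1 hj₀ h0
  -- RHS factors positive
  have hR1 : 0 < (Finset.univ.filter (fun u : Fin n → F =>
      (fun j : {j // j ∈ Fs} => u j.1) = a)).card := by
    rw [Finset.card_pos]
    refine ⟨fun j => if j = j₀ then 1 else 0, ?_⟩
    simp only [Finset.mem_filter, Finset.mem_univ, true_and]
    exact ha.symm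
  have hR2 : 0 < (Finset.univ.filter (fun u : Fin n → F =>
      Matrix.vecMul u Gᵀ = 0)).card := by
    rw [Finset.card_pos]
    refine ⟨0, ?_⟩
    simp
  rw [hL, zero_mul] at key
  exact absurd key.symm (Nat.mul_ne_zero hR1.ne' hR2.ne')
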